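/- Let X, Y ∈ ℝ^{n×d} with n ≥ d ≥ 1, suppose X has full column rank d, and let σ_min(X) > 0 denote its smallest singular value. Set ε = ‖Y Yᵀ − X Xᵀ‖_F^{1/2}. If ε/σ_min(X) ≤ 1/√2, then min over d×d orthogonal matrices O of ‖Y − XO‖_F ≤ (1 + √2) · ε² / σ_min(X). -/

import Mathlib

open scoped Matrix

/-- Frobenius norm of a real matrix. -/
noncomputable def frob {m l : Type*} [Fintype m] [Fintype l] (A : Matrix m l ℝ) : ℝ :=
  Real.sqrt (∑ i, ∑ j, (A i j) ^ 2)

/-- Euclidean norm of a vector in `ℝ^k`. -/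
noncomputable def enorm2 {k : ℕ} (v : Fin k → ℝ) : ℝ :=
  Real.sqrt (∑ i, v i ^ 2)

/-- Smallest singular value of an `n×d` real matrix: the infimum of `‖Xv‖` over unit
vectors `v ∈ ℝ^d`. -/
noncomputable def sigmaMin {n d : ℕ} (X : Matrix (Fin n) (Fin d) ℝ) : ℝ :=
  sInf {c | ∃ v : Fin d → ℝ, enorm2 v = 1 ∧ c = enorm2 (X.mulVec v)}


namespace Stmt17

open Matrix

lemma enorm2_nonneg {k : ℕ} (v : Fin k → ℝ) : 0 ≤ enorm2 v := Real.sqrt_nonneg _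

lemma enorm2_sq {k : ℕ} (v : Fin k → ℝ) : enorm2 v ^ 2 = ∑ i, v i ^ 2 :=
  Real.sq_sqrt (Finset.sum_nonneg fun _ _ => sq_nonneg _)

lemma enorm2_sq_eq_dot {k : ℕ} (v : Fin k → ℝ) : enorm2 v ^ 2 = v ⬝ᵥ v := by
  rw [enorm2_sq]; simp [dotProduct, sq]

lemma le_of_sq_le_sq {a b : ℝ} (ha : 0 ≤ a) (hb : 0 ≤ b) (h : a ^ 2 ≤ b ^ 2) : a ≤ b := by
  nlinarith

lemma dot_le_enorm2 {k : ℕ} (v w : Fin k → ℝ) : v ⬝ᵥ w ≤ enorm2 v * enorm2 w := by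
  have h := Finset.sum_mul_sq_le_sq_mul_sq Finset.univ v w
  have h2 : (v ⬝ᵥ w) ^ 2 ≤ (enorm2 v * enorm2 w) ^ 2 := by
    rw [mul_pow, enorm2_sq, enorm2_sq]; simpa [dotProduct] using h
  nlinarith [mul_nonneg (enorm2_nonneg v) (enorm2_nonneg w)]

lemma enorm2_neg {k : ℕ} (v : Fin k → ℝ) : enorm2 (-v) = enorm2 v := by
  unfold enorm2; simp

lemma neg_enorm2_le_dot {k : ℕ} (v w : Fin k → ℝ) :
    -(enorm2 v * enorm2 w) ≤ v ⬝ᵥ w := by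
  have h := dot_le_enorm2 (-v) w
  rw [neg_dotProduct, enorm2_neg] at h
  linarith

lemma enorm2_smul {k : ℕ} (t : ℝ) (v : Fin k → ℝ) : enorm2 (t • v) = |t| * enorm2 v := by
  unfold enorm2
  rw [← Real.sqrt_sq_eq_abs, ← Real.sqrt_mul (sq_nonneg t), Finset.mul_sum]
  congr 1
  refine Finset.sum_congr rfl fun i _ => ?_
  simp [mul_pow]

lemma enorm2_pos {k : ℕ} {v : Fin k → ℝ} (hv : v ≠ 0) : 0 < enorm2 v := by
  rcases (enorm2_nonneg v).eq_or_lt with h | h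
  · exfalso
    apply hv
    have h2 : ∑ i, v i ^ 2 ≤ 0 := Real.sqrt_eq_zero'.mp h.symm
    have h2' : ∑ i, v i ^ 2 = 0 :=
      le_antisymm h2 (Finset.sum_nonneg fun i _ => sq_nonneg _)
    have h3 := (Finset.sum_eq_zero_iff_of_nonneg (fun i _ => sq_nonneg (v i))).mp h2'
    funext i
    exact pow_eq_zero_iff (n := 2) (by norm_num) |>.mp (h3 i (Finset.mem_univ i))
  · exact h

lemma frob_nonneg {m l : Type*} [Fintype m] [Fintype l] (M : Matrix m l ℝ) : 0 ≤ frob M :=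
  Real.sqrt_nonneg _

lemma frob_sq {m l : Type*} [Fintype m] [Fintype l] (M : Matrix m l ℝ) :
    frob M ^ 2 = ∑ i, ∑ j, (M i j) ^ 2 :=
  Real.sq_sqrt (Finset.sum_nonneg fun _ _ => Finset.sum_nonneg fun _ _ => sq_nonneg _)

lemma frob_transpose {m l : Type*} [Fintype m] [Fintype l] (M : Matrix m l ℝ) :
    frob Mᵀ = frob M := by
  rw [frob, frob, Finset.sum_comm]
  simp [Matrix.transpose_apply]

variable {a b c : ℕ}

lemma frob_sq_cols (C : Matrix (Fin b) (Fin c) ℝ) :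
    frob C ^ 2 = ∑ j, enorm2 (fun i => C i j) ^ 2 := by
  rw [frob_sq, Finset.sum_comm]
  exact Finset.sum_congr rfl fun j _ => (enorm2_sq _).symm

lemma frob_sq_mul_cols (A : Matrix (Fin a) (Fin b) ℝ) (C : Matrix (Fin b) (Fin c) ℝ) :
    frob (A * C) ^ 2 = ∑ j, enorm2 (A *ᵥ fun k => C k j) ^ 2 := by
  rw [frob_sq, Finset.sum_comm]
  refine Finset.sum_congr rfl fun j _ => ?_
  rw [enorm2_sq]
  refine Finset.sum_congr rfl fun i _ => ?_
  simp [Matrix.mul_apply, Matrix.mulVec, dotProduct]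

lemma frob_mul_le {c0 : ℝ} (hc : 0 ≤ c0) (A : Matrix (Fin a) (Fin b) ℝ)
    (C : Matrix (Fin b) (Fin c) ℝ) (h : ∀ v, enorm2 (A *ᵥ v) ≤ c0 * enorm2 v) :
    frob (A * C) ≤ c0 * frob C := by
  refine le_of_sq_le_sq (frob_nonneg _) (mul_nonneg hc (frob_nonneg _)) ?_
  rw [mul_pow, frob_sq_mul_cols, frob_sq_cols, Finset.mul_sum]
  refine Finset.sum_le_sum fun j _ => ?_
  rw [← mul_pow]
  exact pow_le_pow_left₀ (enorm2_nonneg _) (h _) 2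

lemma le_frob_mul {c0 : ℝ} (hc : 0 ≤ c0) (A : Matrix (Fin a) (Fin b) ℝ)
    (C : Matrix (Fin b) (Fin c) ℝ) (h : ∀ v, c0 * enorm2 v ≤ enorm2 (A *ᵥ v)) :
    c0 * frob C ≤ frob (A * C) := by
  refine le_of_sq_le_sq (mul_nonneg hc (frob_nonneg _)) (frob_nonneg _) ?_
  rw [mul_pow, frob_sq_mul_cols, frob_sq_cols, Finset.mul_sum]
  refine Finset.sum_le_sum fun j _ => ?_
  rw [← mul_pow]
  exact pow_le_pow_left₀ (mul_nonneg hc (enorm2_nonneg _)) (h _) 2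

lemma frob_mul_right_le {c0 : ℝ} (hc : 0 ≤ c0) (M : Matrix (Fin a) (Fin b) ℝ)
    (N : Matrix (Fin b) (Fin c) ℝ) (h : ∀ v, enorm2 (Nᵀ *ᵥ v) ≤ c0 * enorm2 v) :
    frob (M * N) ≤ c0 * frob M := by
  have e : frob (M * N) = frob (Nᵀ * Mᵀ) := by
    rw [← frob_transpose (M * N), Matrix.transpose_mul]
  rw [e, ← frob_transpose M]
  exact frob_mul_le hc _ _ h

lemma le_frob_mul_right {c0 : ℝ} (hc : 0 ≤ c0) (M : Matrix (Fin a) (Fin b) ℝ)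
    (N : Matrix (Fin b) (Fin c) ℝ) (h : ∀ v, c0 * enorm2 v ≤ enorm2 (Nᵀ *ᵥ v)) :
    c0 * frob M ≤ frob (M * N) := by
  have e : frob (M * N) = frob (Nᵀ * Mᵀ) := by
    rw [← frob_transpose (M * N), Matrix.transpose_mul]
  rw [e, ← frob_transpose M]
  exact le_frob_mul hc _ _ h

lemma enorm2_mulVec_le (M : Matrix (Fin a) (Fin b) ℝ) (v : Fin b → ℝ) :
    enorm2 (M *ᵥ v) ≤ frob M * enorm2 v := by
  refine le_of_sq_le_sq (enorm2_nonneg _) (mul_nonneg (frob_nonneg _) (enorm2_nonneg _)) ?_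
  rw [mul_pow, enorm2_sq, frob_sq, enorm2_sq, Finset.sum_mul]
  refine Finset.sum_le_sum fun i _ => ?_
  have e : (M *ᵥ v) i = ∑ j, M i j * v j := by
    simp [Matrix.mulVec, dotProduct]
  rw [e]
  exact Finset.sum_mul_sq_le_sq_mul_sq Finset.univ _ _

lemma mulVec_self_dot (M : Matrix (Fin a) (Fin b) ℝ) (v : Fin b → ℝ) :
    (M *ᵥ v) ⬝ᵥ (M *ᵥ v) = v ⬝ᵥ ((Mᵀ * M) *ᵥ v) := by
  rw [← Matrix.mulVec_mulVec]
  conv_rhs => rw [Matrix.dotProduct_mulVec, Matrix.vecMul_transpose]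

lemma proj_contract {k : ℕ} {P : Matrix (Fin k) (Fin k) ℝ} (hsym : Pᵀ = P)
    (hP : P * P = P) (v : Fin k → ℝ) : enorm2 (P *ᵥ v) ≤ enorm2 v := by
  have h1 : enorm2 (P *ᵥ v) ^ 2 = v ⬝ᵥ (P *ᵥ v) := by
    rw [enorm2_sq_eq_dot, mulVec_self_dot, hsym, hP]
  have h2 : v ⬝ᵥ (P *ᵥ v) ≤ enorm2 v * enorm2 (P *ᵥ v) := dot_le_enorm2 _ _
  rcases (enorm2_nonneg (P *ᵥ v)).eq_or_lt with h0 | h0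
  · rw [← h0]; exact enorm2_nonneg v
  · have h3 : enorm2 (P *ᵥ v) * enorm2 (P *ᵥ v) ≤ enorm2 v * enorm2 (P *ᵥ v) := by
      calc enorm2 (P *ᵥ v) * enorm2 (P *ᵥ v) = enorm2 (P *ᵥ v) ^ 2 := (sq _).symm
        _ = v ⬝ᵥ (P *ᵥ v) := h1
        _ ≤ _ := h2
    exact le_of_mul_le_mul_right h3 h0

lemma sigmaMin_le_mulVec {n d : ℕ} (X : Matrix (Fin n) (Fin d) ℝ) (v : Fin d → ℝ) :
    sigmaMin X * enorm2 v ≤ enorm2 (X *ᵥ v) := by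
  rcases eq_or_ne (enorm2 v) 0 with h | h
  · rw [h, mul_zero]; exact enorm2_nonneg _
  have hv : 0 < enorm2 v := (enorm2_nonneg v).lt_of_ne (Ne.symm h)
  have hmem : enorm2 ((enorm2 v)⁻¹ • v) = 1 := by
    rw [enorm2_smul, abs_of_pos (inv_pos.2 hv), inv_mul_cancel₀ h]
  have hle : sigmaMin X ≤ enorm2 (X *ᵥ ((enorm2 v)⁻¹ • v)) :=
    csInf_le ⟨0, fun x ⟨w, _, hx⟩ => hx ▸ enorm2_nonneg _⟩ ⟨_, hmem, rfl⟩
  rw [Matrix.mulVec_smul, enorm2_smul, abs_of_pos (inv_pos.2 hv)] at hle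
  have h2 := mul_le_mul_of_nonneg_right hle hv.le
  calc sigmaMin X * enorm2 v ≤ (enorm2 v)⁻¹ * enorm2 (X *ᵥ v) * enorm2 v := h2
    _ = enorm2 (X *ᵥ v) := by field_simp

lemma frob_eq_norm {m l : Type*} [Fintype m] [Fintype l] (M : Matrix m l ℝ) :
    frob M = ‖(WithLp.equiv 2 ((m × l) → ℝ)).symm (fun p => M p.1 p.2)‖ := by
  rw [EuclideanSpace.norm_eq, frob]
  congr 1
  rw [← Finset.sum_product']
  simp [WithLp.equiv_symm_apply, Real.norm_eq_abs, sq_abs]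

lemma frob_add_le {m l : Type*} [Fintype m] [Fintype l] (M N : Matrix m l ℝ) :
    frob (M + N) ≤ frob M + frob N := by
  rw [frob_eq_norm, frob_eq_norm, frob_eq_norm]
  have e : ((fun p : m × l => (M + N) p.1 p.2) : (m × l) → ℝ)
      = (fun p => M p.1 p.2) + (fun p => N p.1 p.2) := rfl
  rw [e, WithLp.equiv_symm_apply, WithLp.toLp_add]
  exact norm_add_le _ _

end Stmt17

open Stmt17 Matrix in
set_option maxHeartbeats 1000000 in
/-- perturbation bound for the orthogonal Procrustes problem
(Arias-Castro et al.): if `X` has full column rank and `ε = ‖YYᵀ − XXᵀ‖_F^{1/2}` satisfies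
`ε/σ_min(X) ≤ 1/√2`, then `min_{O ∈ O(d)} ‖Y − XO‖_F ≤ (1+√2)ε²/σ_min(X)`. -/
theorem stmt_17 {n d : ℕ} (hd : 1 ≤ d) (hnd : d ≤ n)
    (X Y : Matrix (Fin n) (Fin d) ℝ) (hrank : X.rank = d) (hpos : 0 < sigmaMin X)
    (hε : Real.sqrt (frob (Y * Yᵀ - X * Xᵀ)) / sigmaMin X ≤ 1 / Real.sqrt 2) :
    ∃ O : Matrix (Fin d) (Fin d) ℝ, Oᵀ * O = 1 ∧
      frob (Y - X * O) ≤ (1 + Real.sqrt 2) * frob (Y * Yᵀ - X * Xᵀ) / sigmaMin X := by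
  classical
  set σ := sigmaMin X with hσdef
  set E := Y * Yᵀ - X * Xᵀ with hEdef
  set f := frob E with hfdef
  have hf0 : 0 ≤ f := frob_nonneg _
  have hσ0 : (0:ℝ) < σ := hpos
  have hs2 : (0:ℝ) < Real.sqrt 2 := Real.sqrt_pos.mpr (by norm_num)
  have hs2sq : (Real.sqrt 2) ^ 2 = 2 := Real.sq_sqrt (by norm_num)
  -- ε² = f ≤ σ²/2
  have hf2 : f ≤ σ ^ 2 / 2 := by
    have h1 : Real.sqrt f ≤ 1 / Real.sqrt 2 * σ := by
      rw [div_le_iff₀ hσ0] at hε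
      linarith
    have h3 : (Real.sqrt f) ^ 2 ≤ (1 / Real.sqrt 2 * σ) ^ 2 :=
      pow_le_pow_left₀ (Real.sqrt_nonneg _) h1 2
    rw [Real.sq_sqrt hf0] at h3
    calc f ≤ (1 / Real.sqrt 2 * σ) ^ 2 := h3
      _ = σ ^ 2 / 2 := by rw [mul_pow, div_pow, one_pow, hs2sq]; ring
  have hXlow : ∀ v, σ * enorm2 v ≤ enorm2 (X *ᵥ v) := fun v => sigmaMin_le_mulVec X v
  -- XᵀX invertible
  set K := Xᵀ * X with hKdef
  have hKdet : IsUnit K.det := by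
    rw [isUnit_iff_ne_zero]
    intro h0
    obtain ⟨v, hv, hKv⟩ := (Matrix.exists_mulVec_eq_zero_iff).mpr h0
    have h1 : enorm2 (X *ᵥ v) ^ 2 = v ⬝ᵥ (K *ᵥ v) := by
      rw [enorm2_sq_eq_dot, mulVec_self_dot, hKdef]
    rw [hKv, dotProduct_zero] at h1
    have h2 := hXlow v
    have h3 : 0 < enorm2 v := enorm2_pos hv
    have h4 : enorm2 (X *ᵥ v) = 0 := by
      exact pow_eq_zero_iff (two_ne_zero) |>.mp h1
    linarith [mul_pos hσ0 h3]
  have hKmul : K * K⁻¹ = 1 := Matrix.mul_nonsing_inv _ hKdet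
  have hKmul' : K⁻¹ * K = 1 := Matrix.nonsing_inv_mul _ hKdet
  set G := K⁻¹ * Xᵀ with hGdef
  set B := G * Y with hBdef
  set A := Y - X * B with hAdef
  set P := X * G with hPdef
  set Q := (1 : Matrix (Fin n) (Fin n) ℝ) - P with hQdef
  have hGX : G * X = 1 := by rw [hGdef, Matrix.mul_assoc, ← hKdef, hKmul']
  have hKsym : Kᵀ = K := by rw [hKdef, Matrix.transpose_mul, Matrix.transpose_transpose]
  have hGT : Gᵀ = X * K⁻¹ := by
    rw [hGdef, Matrix.transpose_mul, Matrix.transpose_transpose,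
      Matrix.transpose_nonsing_inv, hKsym]
  have hPsym : Pᵀ = P := by
    rw [hPdef, Matrix.transpose_mul, hGT, Matrix.mul_assoc, ← hGdef]
  have hPP : P * P = P := by
    rw [hPdef, Matrix.mul_assoc X G (X * G), ← Matrix.mul_assoc G X G, hGX,
      Matrix.one_mul]
  have hQsym : Qᵀ = Q := by rw [hQdef, Matrix.transpose_sub, Matrix.transpose_one, hPsym]
  have hQQ : Q * Q = Q := by
    rw [hQdef]
    simp only [Matrix.sub_mul, Matrix.mul_sub, Matrix.one_mul, Matrix.mul_one, hPP]
    abel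
  have hXP : Xᵀ * P = Xᵀ := by
    rw [hPdef, hGdef, ← Matrix.mul_assoc Xᵀ X (K⁻¹ * Xᵀ), ← hKdef,
      ← Matrix.mul_assoc K K⁻¹ Xᵀ, hKmul, Matrix.one_mul]
  have hXQ : Xᵀ * Q = 0 := by rw [hQdef, Matrix.mul_sub, Matrix.mul_one, hXP, sub_self]
  have hKB : K * B = Xᵀ * Y := by
    rw [hBdef, hGdef, Matrix.mul_assoc K⁻¹ Xᵀ Y, ← Matrix.mul_assoc K K⁻¹ (Xᵀ * Y),
      hKmul, Matrix.one_mul]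
  have hXtA : Xᵀ * A = 0 := by
    rw [hAdef, Matrix.mul_sub, ← Matrix.mul_assoc Xᵀ X B, ← hKdef, hKB, sub_self]
  have hQY : Q * Y = A := by
    rw [hQdef, Matrix.sub_mul, Matrix.one_mul, hPdef, Matrix.mul_assoc, ← hBdef, ← hAdef]
  -- Gram identities
  have hGE : G * E * Gᵀ = B * Bᵀ - 1 := by
    have hy : G * (Y * Yᵀ) * Gᵀ = B * Bᵀ := by
      rw [← Matrix.mul_assoc G Y Yᵀ, ← hBdef, Matrix.mul_assoc B Yᵀ Gᵀ,
        ← Matrix.transpose_mul, ← hBdef]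
    have hx : G * (X * Xᵀ) * Gᵀ = 1 := by
      rw [← Matrix.mul_assoc G X Xᵀ, hGX, Matrix.one_mul, ← Matrix.transpose_mul, hGX,
        Matrix.transpose_one]
    rw [hEdef, Matrix.mul_sub G (Y * Yᵀ) (X * Xᵀ),
      Matrix.sub_mul (G * (Y * Yᵀ)) (G * (X * Xᵀ)) Gᵀ, hy, hx]
  have hGEQ : G * E * Q = B * Aᵀ := by
    have hy : G * (Y * Yᵀ) * Q = B * Aᵀ := by
      rw [← Matrix.mul_assoc G Y Yᵀ, ← hBdef, Matrix.mul_assoc B Yᵀ Q]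
      congr 1
      rw [← hQsym, ← Matrix.transpose_mul, hQY]
    have hx : G * (X * Xᵀ) * Q = 0 := by
      rw [Matrix.mul_assoc, Matrix.mul_assoc X Xᵀ Q, hXQ, Matrix.mul_zero, Matrix.mul_zero]
    rw [hEdef, Matrix.mul_sub G (Y * Yᵀ) (X * Xᵀ),
      Matrix.sub_mul (G * (Y * Yᵀ)) (G * (X * Xᵀ)) Q, hy, hx, sub_zero]
  -- contraction bounds
  have hPcon : ∀ v, enorm2 (P *ᵥ v) ≤ enorm2 v := fun v => proj_contract hPsym hPP v
  have hQcon : ∀ v, enorm2 (Q *ᵥ v) ≤ enorm2 v := fun v => proj_contract hQsym hQQ v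
  have hGcon : ∀ v, enorm2 (G *ᵥ v) ≤ σ⁻¹ * enorm2 v := by
    intro v
    have h1 : σ * enorm2 (G *ᵥ v) ≤ enorm2 (X *ᵥ (G *ᵥ v)) := hXlow _
    rw [Matrix.mulVec_mulVec, ← hPdef] at h1
    have h3 : σ * enorm2 (G *ᵥ v) ≤ enorm2 v := le_trans h1 (hPcon v)
    calc enorm2 (G *ᵥ v) = σ⁻¹ * (σ * enorm2 (G *ᵥ v)) := by field_simp
      _ ≤ σ⁻¹ * enorm2 v := mul_le_mul_of_nonneg_left h3 (inv_nonneg.2 hσ0.le)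
  -- frob (BBᵀ - 1) ≤ f/σ²
  have hBB1 : frob (B * Bᵀ - 1) ≤ f / σ ^ 2 := by
    have e1 : B * Bᵀ - 1 = G * (E * Gᵀ) := by rw [← Matrix.mul_assoc, hGE]
    have h1 : frob (G * (E * Gᵀ)) ≤ σ⁻¹ * frob (E * Gᵀ) :=
      frob_mul_le (inv_nonneg.2 hσ0.le) G _ hGcon
    have h2 : frob (E * Gᵀ) ≤ σ⁻¹ * frob E := by
      refine frob_mul_right_le (inv_nonneg.2 hσ0.le) E Gᵀ ?_
      intro v; rw [Matrix.transpose_transpose]; exact hGcon v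
    rw [e1]
    calc frob (G * (E * Gᵀ)) ≤ σ⁻¹ * frob (E * Gᵀ) := h1
      _ ≤ σ⁻¹ * (σ⁻¹ * f) := mul_le_mul_of_nonneg_left h2 (inv_nonneg.2 hσ0.le)
      _ = f / σ ^ 2 := by rw [div_eq_mul_inv, pow_two, mul_inv]; ring
  have hδhalf : f / σ ^ 2 ≤ 1 / 2 := by
    rw [div_le_div_iff₀ (by positivity) (by norm_num)]
    linarith
  have hBBhalf : frob (B * Bᵀ - 1) ≤ 1 / 2 := le_trans hBB1 hδhalf
  -- lower bound for Bᵀ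
  have hBtlow : ∀ v, (Real.sqrt 2)⁻¹ * enorm2 v ≤ enorm2 (Bᵀ *ᵥ v) := by
    intro v
    have h1 : enorm2 (Bᵀ *ᵥ v) ^ 2 = v ⬝ᵥ ((B * Bᵀ) *ᵥ v) := by
      rw [enorm2_sq_eq_dot, mulVec_self_dot, Matrix.transpose_transpose]
    have h2 : v ⬝ᵥ ((B * Bᵀ) *ᵥ v) = v ⬝ᵥ v + v ⬝ᵥ ((B * Bᵀ - 1) *ᵥ v) := by
      have e2 : (B * Bᵀ) *ᵥ v = 1 *ᵥ v + (B * Bᵀ - 1) *ᵥ v := by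
        rw [Matrix.sub_mulVec]; abel
      rw [e2, dotProduct_add, Matrix.one_mulVec]
    have h3 := neg_enorm2_le_dot v ((B * Bᵀ - 1) *ᵥ v)
    have h4 := enorm2_mulVec_le (B * Bᵀ - 1) v
    refine le_of_sq_le_sq (mul_nonneg (inv_nonneg.2 hs2.le) (enorm2_nonneg v))
      (enorm2_nonneg _) ?_
    rw [mul_pow, h1, h2]
    have hinv2 : ((Real.sqrt 2)⁻¹) ^ 2 = 1 / 2 := by
      rw [inv_pow, hs2sq]; norm_num
    rw [hinv2, ← enorm2_sq_eq_dot]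
    nlinarith [enorm2_nonneg v, enorm2_nonneg ((B * Bᵀ - 1) *ᵥ v), hBBhalf,
      mul_le_mul_of_nonneg_left h4 (enorm2_nonneg v)]
  have hdetB : IsUnit B.det := by
    rw [isUnit_iff_ne_zero]
    intro h0
    have h0t : Bᵀ.det = 0 := by rw [Matrix.det_transpose]; exact h0
    obtain ⟨v, hv, hBv⟩ := Matrix.exists_mulVec_eq_zero_iff.mpr h0t
    have h1 := hBtlow v
    rw [hBv] at h1
    have h2 : enorm2 (0 : Fin d → ℝ) = 0 := by simp [enorm2]
    rw [h2] at h1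
    have h3 := enorm2_pos hv
    nlinarith [inv_pos.2 hs2]
  have hdetBt : IsUnit Bᵀ.det := by rw [Matrix.det_transpose]; exact hdetB
  have hBlow : ∀ v, (Real.sqrt 2)⁻¹ * enorm2 v ≤ enorm2 (B *ᵥ v) := by
    intro v
    set w := (Bᵀ)⁻¹ *ᵥ v with hw
    have hwv : Bᵀ *ᵥ w = v := by
      rw [hw, Matrix.mulVec_mulVec, Matrix.mul_nonsing_inv _ hdetBt, Matrix.one_mulVec]
    have h1 : v ⬝ᵥ v = w ⬝ᵥ (B *ᵥ v) := by
      calc v ⬝ᵥ v = (Bᵀ *ᵥ w) ⬝ᵥ v := by rw [hwv]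
        _ = v ⬝ᵥ (Bᵀ *ᵥ w) := dotProduct_comm _ _
        _ = (v ᵥ* Bᵀ) ⬝ᵥ w := Matrix.dotProduct_mulVec _ _ _
        _ = (B *ᵥ v) ⬝ᵥ w := by rw [Matrix.vecMul_transpose]
        _ = w ⬝ᵥ (B *ᵥ v) := dotProduct_comm _ _
    have h2 : w ⬝ᵥ (B *ᵥ v) ≤ enorm2 w * enorm2 (B *ᵥ v) := dot_le_enorm2 _ _
    have h3 : (Real.sqrt 2)⁻¹ * enorm2 w ≤ enorm2 v := by
      have := hBtlow w; rwa [hwv] at this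
    have h4 : enorm2 w ≤ Real.sqrt 2 * enorm2 v := by
      have h5 := mul_le_mul_of_nonneg_left h3 hs2.le
      rw [← mul_assoc, mul_inv_cancel₀ hs2.ne', one_mul] at h5
      exact h5
    rcases (enorm2_nonneg v).eq_or_lt with h0 | h0
    · rw [← h0, mul_zero]; exact enorm2_nonneg _
    · have h5 : enorm2 v ^ 2 ≤ Real.sqrt 2 * enorm2 v * enorm2 (B *ᵥ v) := by
        rw [enorm2_sq_eq_dot, h1]
        nlinarith [enorm2_nonneg (B *ᵥ v), enorm2_nonneg w]
      refine le_of_mul_le_mul_left ?_ (mul_pos hs2 h0)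
      calc Real.sqrt 2 * enorm2 v * ((Real.sqrt 2)⁻¹ * enorm2 v) = enorm2 v ^ 2 := by
            field_simp
        _ ≤ Real.sqrt 2 * enorm2 v * enorm2 (B *ᵥ v) := h5
  -- bound on frob A
  have hAbd : frob A ≤ Real.sqrt 2 * (σ⁻¹ * f) := by
    have e1 : B * Aᵀ = G * (E * Q) := by rw [← Matrix.mul_assoc, hGEQ]
    have h1 : (Real.sqrt 2)⁻¹ * frob Aᵀ ≤ frob (B * Aᵀ) :=
      le_frob_mul (inv_nonneg.2 hs2.le) B Aᵀ hBlow
    have h2 : frob (G * (E * Q)) ≤ σ⁻¹ * frob (E * Q) :=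
      frob_mul_le (inv_nonneg.2 hσ0.le) G _ hGcon
    have h3 : frob (E * Q) ≤ 1 * frob E := by
      refine frob_mul_right_le zero_le_one E Q ?_
      intro v; rw [hQsym, one_mul]; exact hQcon v
    rw [frob_transpose, e1] at h1
    have h4 : (Real.sqrt 2)⁻¹ * frob A ≤ σ⁻¹ * f := by
      calc (Real.sqrt 2)⁻¹ * frob A ≤ frob (G * (E * Q)) := h1
        _ ≤ σ⁻¹ * frob (E * Q) := h2
        _ ≤ σ⁻¹ * (1 * f) := mul_le_mul_of_nonneg_left h3 (inv_nonneg.2 hσ0.le)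
        _ = σ⁻¹ * f := by ring
    have h5 := mul_le_mul_of_nonneg_left h4 hs2.le
    rw [← mul_assoc, mul_inv_cancel₀ hs2.ne', one_mul] at h5
    exact h5
  -- polar decomposition of B
  have hBBpsd : Matrix.PosSemidef (B * Bᵀ) := by
    have h := Matrix.posSemidef_self_mul_conjTranspose B
    rwa [Matrix.conjTranspose_eq_transpose_of_trivial] at h
  open scoped MatrixOrder in
  set S := CFC.sqrt (B * Bᵀ) with hSdef
  open scoped MatrixOrder in
  have hSpsd : S.PosSemidef := (CFC.sqrt_nonneg _).posSemidef
  open scoped MatrixOrder in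
  have hSS : S * S = B * Bᵀ := CFC.sqrt_mul_sqrt_self _ hBBpsd.nonneg
  have hSsym : Sᵀ = S := by
    have h := hSpsd.isHermitian
    rwa [Matrix.IsHermitian, Matrix.conjTranspose_eq_transpose_of_trivial] at h
  have hSquad : ∀ v, 0 ≤ v ⬝ᵥ (S *ᵥ v) := by
    intro v
    have h := hSpsd.dotProduct_mulVec_nonneg v
    simpa using h
  have hSdetu : IsUnit S.det := by
    rw [isUnit_iff_ne_zero]
    intro h0
    have h1 : (B * Bᵀ).det = 0 := by rw [← hSS, Matrix.det_mul, h0, mul_zero]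
    rw [Matrix.det_mul, Matrix.det_transpose] at h1
    exact (isUnit_iff_ne_zero.mp hdetB) (mul_self_eq_zero.mp h1)
  set O := S⁻¹ * B with hOdef
  have hOsymT : Oᵀ = Bᵀ * S⁻¹ := by
    rw [hOdef, Matrix.transpose_mul, Matrix.transpose_nonsing_inv, hSsym]
  have hOrth : Oᵀ * O = 1 := by
    rw [hOsymT, hOdef]
    calc Bᵀ * S⁻¹ * (S⁻¹ * B) = Bᵀ * ((S⁻¹ * S⁻¹) * B) := by
          rw [Matrix.mul_assoc, Matrix.mul_assoc]
      _ = Bᵀ * ((S * S)⁻¹ * B) := by rw [Matrix.mul_inv_rev]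
      _ = Bᵀ * ((Bᵀ)⁻¹ * (B⁻¹ * B)) := by rw [hSS, Matrix.mul_inv_rev, Matrix.mul_assoc]
      _ = Bᵀ * (Bᵀ)⁻¹ := by rw [Matrix.nonsing_inv_mul _ hdetB, Matrix.mul_one]
      _ = 1 := Matrix.mul_nonsing_inv _ hdetBt
  have hOOt : O * Oᵀ = 1 := mul_eq_one_comm.mp hOrth
  have hOcon : ∀ v, enorm2 (Oᵀ *ᵥ v) ≤ 1 * enorm2 v := by
    intro v
    have h1 : enorm2 (Oᵀ *ᵥ v) ^ 2 = v ⬝ᵥ ((Oᵀᵀ * Oᵀ) *ᵥ v) := by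
      rw [enorm2_sq_eq_dot, mulVec_self_dot]
    rw [Matrix.transpose_transpose, hOOt, Matrix.one_mulVec, ← enorm2_sq_eq_dot] at h1
    rw [one_mul]
    exact le_of_sq_le_sq (enorm2_nonneg _) (enorm2_nonneg _) (le_of_eq h1)
  have hSplus : ∀ v, 1 * enorm2 v ≤ enorm2 ((S + 1) *ᵥ v) := by
    intro v
    rw [one_mul]
    refine le_of_sq_le_sq (enorm2_nonneg _) (enorm2_nonneg _) ?_
    have h1 : enorm2 ((S + 1) *ᵥ v) ^ 2 = v ⬝ᵥ (((S + 1)ᵀ * (S + 1)) *ᵥ v) := by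
      rw [enorm2_sq_eq_dot, mulVec_self_dot]
    have h2 : (S + 1)ᵀ * (S + 1) = S * S + (S + (S + 1)) := by
      rw [Matrix.transpose_add, hSsym, Matrix.transpose_one]
      noncomm_ring
    rw [h1, h2]
    have e3 : (S * S + (S + (S + 1))) *ᵥ v
        = (S * S) *ᵥ v + (S *ᵥ v + (S *ᵥ v + 1 *ᵥ v)) := by
      rw [Matrix.add_mulVec, Matrix.add_mulVec, Matrix.add_mulVec]
    rw [e3, dotProduct_add, dotProduct_add, dotProduct_add,
      Matrix.one_mulVec]
    have h3 : 0 ≤ v ⬝ᵥ ((S * S) *ᵥ v) := by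
      have e4 : S * S = Sᵀ * S := by rw [hSsym]
      rw [e4, ← mulVec_self_dot, ← enorm2_sq_eq_dot]
      positivity
    have h4 := hSquad v
    rw [← enorm2_sq_eq_dot]
    linarith
  have hSO : S * O = B := by
    rw [hOdef, ← Matrix.mul_assoc, Matrix.mul_nonsing_inv _ hSdetu, Matrix.one_mul]
  have hBO : B - O = (S - 1) * O := by rw [Matrix.sub_mul, Matrix.one_mul, hSO]
  have hGtXt : Gᵀ * Xᵀ = P := by rw [← Matrix.transpose_mul, ← hPdef, hPsym]
  have hfact : X * (S - 1) * (S + 1) * Xᵀ = P * (E * P) := by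
    have h1 : (S - 1) * (S + 1) = B * Bᵀ - 1 := by rw [← hSS]; noncomm_ring
    rw [Matrix.mul_assoc X (S - 1) (S + 1), h1, ← hGE]
    rw [Matrix.mul_assoc X (G * E * Gᵀ) Xᵀ, Matrix.mul_assoc (G * E) Gᵀ Xᵀ, hGtXt,
      Matrix.mul_assoc G E P, ← Matrix.mul_assoc X G (E * P), ← hPdef]
  -- frob(X(S-1)) ≤ σ⁻¹ f
  have hM1 : frob (X * (S - 1)) ≤ σ⁻¹ * f := by
    have step1 : 1 * frob (X * (S - 1)) ≤ frob ((X * (S - 1)) * (S + 1)) := by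
      refine le_frob_mul_right zero_le_one _ (S + 1) ?_
      intro v
      rw [Matrix.transpose_add, hSsym, Matrix.transpose_one]
      exact hSplus v
    have step2 : σ * frob ((X * (S - 1)) * (S + 1)) ≤
        frob (((X * (S - 1)) * (S + 1)) * Xᵀ) := by
      refine le_frob_mul_right hσ0.le _ Xᵀ ?_
      intro v; rw [Matrix.transpose_transpose]; exact hXlow v
    have step4 : frob (P * (E * P)) ≤ 1 * frob (E * P) := by
      refine frob_mul_le zero_le_one P _ ?_
      intro v; rw [one_mul]; exact hPcon v
    have step5 : frob (E * P) ≤ 1 * frob E := by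
      refine frob_mul_right_le zero_le_one E P ?_
      intro v; rw [hPsym, one_mul]; exact hPcon v
    have chain : σ * frob (X * (S - 1)) ≤ f := by
      calc σ * frob (X * (S - 1)) = σ * (1 * frob (X * (S - 1))) := by ring
        _ ≤ σ * frob ((X * (S - 1)) * (S + 1)) := mul_le_mul_of_nonneg_left step1 hσ0.le
        _ ≤ frob (((X * (S - 1)) * (S + 1)) * Xᵀ) := step2
        _ = frob (P * (E * P)) := by rw [hfact]
        _ ≤ 1 * frob (E * P) := step4
        _ = frob (E * P) := one_mul _
        _ ≤ 1 * frob E := step5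
        _ = f := one_mul _
    calc frob (X * (S - 1)) = σ⁻¹ * (σ * frob (X * (S - 1))) := by field_simp
      _ ≤ σ⁻¹ * f := mul_le_mul_of_nonneg_left chain (inv_nonneg.2 hσ0.le)
  have hXBO : frob (X * (B - O)) ≤ σ⁻¹ * f := by
    have e1 : X * (B - O) = (X * (S - 1)) * O := by rw [hBO, ← Matrix.mul_assoc]
    rw [e1]
    have h1 : frob ((X * (S - 1)) * O) ≤ 1 * frob (X * (S - 1)) :=
      frob_mul_right_le zero_le_one _ O hOcon
    rw [one_mul] at h1
    exact le_trans h1 hM1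
  refine ⟨O, hOrth, ?_⟩
  have hfinal : Y - X * O = X * (B - O) + A := by
    rw [hAdef, Matrix.mul_sub]; abel
  calc frob (Y - X * O) = frob (X * (B - O) + A) := by rw [hfinal]
    _ ≤ frob (X * (B - O)) + frob A := frob_add_le _ _
    _ ≤ σ⁻¹ * f + Real.sqrt 2 * (σ⁻¹ * f) := add_le_add hXBO hAbd
    _ = (1 + Real.sqrt 2) * f / σ := by field_simp
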